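/- Let 0 < P_fa < 1/2, P_fa < P_d < 1, and 0 < π_{1,0} < π_{1,1} < 1 with (1−P_d)(1−π_{1,0}) < (1−P_fa)(1−π_{1,1}). Then (1−2P_d)·((1−π_{1,0})/(1−π_{1,1}) − π_{1,0}/π_{1,1}) + (1−2P_fa)·log( ((1−π_{1,1})·π_{1,0}) / ((1−π_{1,0})·π_{1,1}) ) < 0. -/

import Mathlib

/-- Sign condition `dD_k/dp < 0` for symmetric flipping probabilities:
`(1−2P_d)·((1−π₁₀)/(1−π₁₁) − π₁₀/π₁₁) + (1−2P_fa)·log(((1−π₁₁)π₁₀)/((1−π₁₀)π₁₁)) < 0`. -/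
theorem stmt_10 (Pfa Pd π10 π11 : ℝ)
    (hPfa : 0 < Pfa) (hPfa2 : Pfa < 1 / 2) (hPfaPd : Pfa < Pd) (hPd : Pd < 1)
    (hπ10 : 0 < π10) (hπ : π10 < π11) (hπ11 : π11 < 1)
    (hcross : (1 - Pd) * (1 - π10) < (1 - Pfa) * (1 - π11)) :
    (1 - 2 * Pd) * ((1 - π10) / (1 - π11) - π10 / π11) +
      (1 - 2 * Pfa) * Real.log (((1 - π11) * π10) / ((1 - π10) * π11)) < 0 := by
  have h11 : 0 < π11 := lt_trans hπ10 hπ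
  have h1y : 0 < 1 - π11 := by linarith
  have h1x : 0 < 1 - π10 := by linarith
  set a : ℝ := (1 - π10) / (1 - π11) with ha
  set b : ℝ := π10 / π11 with hb
  have hA0 : 0 < a := div_pos h1x h1y
  have ha1 : 1 < a := (one_lt_div h1y).2 (by linarith)
  have hb0 : 0 < b := div_pos hπ10 h11
  have hb1 : b < 1 := (div_lt_one h11).2 hπ
  have harg : ((1 - π11) * π10) / ((1 - π10) * π11) = b / a := by
    rw [ha, hb]; field_simp
  have hlog : Real.log (((1 - π11) * π10) / ((1 - π10) * π11))
      = Real.log b - Real.log a := by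
    rw [harg, Real.log_div (ne_of_gt hb0) (ne_of_gt hA0)]
  have hlb : Real.log b < b - 1 := Real.log_lt_sub_one_of_pos hb0 (ne_of_lt hb1)
  have hla : (a - 1) / a < Real.log a := by
    have h := Real.log_lt_sub_one_of_pos (show (0 : ℝ) < 1 / a by positivity)
      (by intro h; rw [div_eq_one_iff_eq (ne_of_gt hA0)] at h; exact (ne_of_gt ha1) h.symm)
    rw [Real.log_div one_ne_zero (ne_of_gt hA0), Real.log_one] at h
    have h2 : (a - 1) / a = 1 - 1 / a := by field_simp
    linarith
  have hcross' : a * (1 - Pd) < 1 - Pfa := by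
    rw [ha, div_mul_eq_mul_div, div_lt_iff₀ h1y]
    nlinarith [hcross]
  have hkey : Real.log b - Real.log a < (b - 1) - (a - 1) / a := by linarith
  have hstep : (1 - 2 * Pfa) * (Real.log b - Real.log a)
      < (1 - 2 * Pfa) * ((b - 1) - (a - 1) / a) :=
    mul_lt_mul_of_pos_left hkey (by linarith)
  have hfs : a * ((a - 1) / a) = a - 1 := by field_simp
  have h2 : a * ((1 - 2 * Pd) * (a - b) + (1 - 2 * Pfa) * ((b - 1) - (a - 1) / a)) < 0 := by
    nlinarith [mul_pos (sub_pos.2 ha1) (lt_trans hPfa hPfaPd),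
      mul_pos hA0 (sub_pos.2 hb1), mul_pos (mul_pos hA0 (sub_pos.2 hb1)) (sub_pos.2 hPfaPd),
      mul_pos (sub_pos.2 ha1) (sub_pos.2 hb1)]
  have halg : (1 - 2 * Pd) * (a - b) + (1 - 2 * Pfa) * ((b - 1) - (a - 1) / a) < 0 := by
    nlinarith [h2, hA0]
  rw [hlog]
  linarith
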